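/- Let A be a finitely generated commutative algebra with a rational action of G × K^×, where G is reductive, such that the graded algebra of G-invariants A^G has no negative graded components. Then for every dominant weight λ, the isotypic component A_λ is a graded subspace whose grading is bounded from below; consequently every finite-dimensional G × K^×-submodule of A[[ħ]] lies in A[ħ]. -/

import Mathlib

open scoped Classical

set_option linter.unusedSectionVars false
section CRaux

variable {K : Type*} [Field K] {G : Type*} [Group G]

/-- The complete-reducibility property of a family of linear automorphisms. -/
def HredProp (K : Type*) [Field K] {G : Type*} (X : Type*) [AddCommGroup X] [Module K X]
    (π : G → X ≃ₗ[K] X) : Prop :=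
  ∀ U : Submodule K X, (∀ g, U.map (π g).toLinearMap ≤ U) →
    ∃ C : Submodule K X, (∀ g, C.map (π g).toLinearMap ≤ C) ∧ IsCompl U C

lemma hred_transport {X Y : Type*} [AddCommGroup X] [Module K X] [AddCommGroup Y] [Module K Y]
    (e : X ≃ₗ[K] Y) (πX : G → X ≃ₗ[K] X) (πY : G → Y ≃ₗ[K] Y)
    (hcomm : ∀ g x, e (πX g x) = πY g (e x))
    (hX : HredProp K X πX) : HredProp K Y πY := by
  intro U hU
  have hU'stab : ∀ g, (U.comap e.toLinearMap).map (πX g).toLinearMap ≤ U.comap e.toLinearMap := by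
    rintro g x ⟨y, hy, rfl⟩
    show e (πX g y) ∈ U
    rw [hcomm]
    exact hU g ⟨e y, hy, rfl⟩
  obtain ⟨C', hC'stab, hC'⟩ := hX _ hU'stab
  refine ⟨C'.map e.toLinearMap, ?_, ?_⟩
  · rintro g y ⟨x, ⟨x', hx', rfl⟩, rfl⟩
    exact ⟨πX g x', hC'stab g ⟨x', hx', rfl⟩, (hcomm g x')⟩
  · have hUeq : U = (U.comap e.toLinearMap).map e.toLinearMap := by
      rw [Submodule.map_comap_eq, LinearEquiv.range, top_inf_eq]
    rw [hUeq]
    have := (Submodule.orderIsoMapComap e).isCompl hC'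
    simpa using this

lemma hred_prod {X Y : Type*} [AddCommGroup X] [Module K X] [AddCommGroup Y] [Module K Y]
    (πX : G → X ≃ₗ[K] X) (πY : G → Y ≃ₗ[K] Y)
    (hX : HredProp K X πX) (hY : HredProp K Y πY) :
    HredProp K (X × Y) (fun g => (πX g).prodCongr (πY g)) := by
  intro Z hZ
  set Zx : Submodule K X := Z.comap (LinearMap.inl K X Y) with hZxdef
  set Ny : Submodule K Y := Z.map (LinearMap.snd K X Y) with hNydef
  have hZx : ∀ g, Zx.map (πX g).toLinearMap ≤ Zx := by
    rintro g x ⟨x', hx', rfl⟩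
    have h2 := hZ g ⟨(x', 0), hx', rfl⟩
    show ((πX g x', (0:Y)) : X × Y) ∈ Z
    simpa using h2
  have hNy : ∀ g, Ny.map (πY g).toLinearMap ≤ Ny := by
    rintro g y ⟨y', ⟨z, hz, rfl⟩, rfl⟩
    exact ⟨((πX g).prodCongr (πY g)) z, hZ g ⟨z, hz, rfl⟩, rfl⟩
  obtain ⟨Cx, hCxstab, hCx⟩ := hX Zx hZx
  obtain ⟨Cy, hCystab, hCy⟩ := hY Ny hNy
  refine ⟨(Cx.map (LinearMap.inl K X Y)) ⊔ (Cy.map (LinearMap.inr K X Y)), ?_, ?_, ?_⟩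
  · intro g
    rw [Submodule.map_sup]
    apply sup_le_sup
    · rintro _ ⟨_, ⟨c, hc, rfl⟩, rfl⟩
      exact ⟨πX g c, hCxstab g ⟨c, hc, rfl⟩, by simp⟩
    · rintro _ ⟨_, ⟨c, hc, rfl⟩, rfl⟩
      exact ⟨πY g c, hCystab g ⟨c, hc, rfl⟩, by simp⟩
  · -- disjointness
    rw [disjoint_iff]
    rw [eq_bot_iff]
    rintro z ⟨hzZ, hzC⟩
    rcases Submodule.mem_sup.mp hzC with ⟨a, ⟨ca, hca, rfl⟩, b, ⟨cb, hcb, rfl⟩, rfl⟩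
    have hz2 : cb ∈ Ny := by
      have : ((LinearMap.inl K X Y) ca + (LinearMap.inr K X Y) cb).2 = cb := by simp
      exact this ▸ ⟨_, hzZ, rfl⟩
    have hcb0 : cb = 0 := (Submodule.disjoint_def.mp hCy.disjoint) cb hz2 hcb
    subst hcb0
    have hz1 : ca ∈ Zx := by
      show (LinearMap.inl K X Y) ca ∈ Z
      simpa using hzZ
    have hca0 : ca = 0 := (Submodule.disjoint_def.mp hCx.disjoint) ca hz1 hca
    subst hca0
    simp
  · -- codisjointness
    rw [codisjoint_iff, eq_top_iff]
    rintro ⟨x, y⟩ -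
    have h1 : y ∈ Ny ⊔ Cy := by rw [hCy.sup_eq_top]; trivial
    rcases Submodule.mem_sup.mp h1 with ⟨n, hn, cy, hcy2, rfl⟩
    rcases hn with ⟨z0, hz0, rfl⟩
    have h2 : x - z0.1 ∈ Zx ⊔ Cx := by rw [hCx.sup_eq_top]; trivial
    rcases Submodule.mem_sup.mp h2 with ⟨zx, hzx, cx, hcx2, hxeq⟩
    have hx' : x = zx + cx + z0.1 := sub_eq_iff_eq_add.mp hxeq.symm
    have hdecomp : ((x, (LinearMap.snd K X Y) z0 + cy) : X × Y)
        = (z0 + (LinearMap.inl K X Y) zx) + ((LinearMap.inl K X Y) cx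
            + (LinearMap.inr K X Y) cy) := by
      apply Prod.ext
      · simp [hx']; abel
      · simp
    rw [hdecomp]
    refine Submodule.add_mem_sup (Submodule.add_mem _ hz0 hzx) ?_
    exact Submodule.add_mem _ (Submodule.mem_sup_left ⟨cx, hcx2, rfl⟩)
      (Submodule.mem_sup_right ⟨cy, hcy2, rfl⟩)

end CRaux

section CRaux2

variable {K : Type*} [Field K] {G : Type*} [Group G]

lemma hred_pi {V : Type*} [AddCommGroup V] [Module K V] (π0 : G → V ≃ₗ[K] V)
    (h0 : HredProp K V π0) (ι : Type*) [Finite ι] :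
    HredProp K (ι → V) (fun g => LinearEquiv.piCongrRight (fun _ : ι => π0 g)) := by
  induction ι using Finite.induction_empty_option with
  | of_equiv e ih =>
    rename_i α β _
    refine hred_transport (LinearEquiv.funCongrLeft K V e.symm) _ _ ?_ ih
    intro g x
    funext b
    simp [LinearEquiv.funCongrLeft]
  | h_empty =>
    intro Z _
    refine ⟨⊥, by simp, ?_⟩
    have hZtop : Z = ⊤ := by
      rw [eq_top_iff]
      intro x _
      have : x = 0 := funext fun i => i.elim
      rw [this]; exact Z.zero_mem
    rw [hZtop]
    exact isCompl_top_bot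
  | h_option ih =>
    rename_i α _
    refine hred_transport
      (LinearEquiv.piOptionEquivProd (R := K) (M := fun _ : Option α => V)).symm
      (fun g => (π0 g).prodCongr (LinearEquiv.piCongrRight (fun _ : α => π0 g))) _ ?_
      (hred_prod _ _ h0 ih)
    intro g x
    funext o
    cases o <;>
      simp [LinearEquiv.piOptionEquivProd, Equiv.piOptionEquivProd]

lemma span_orbit_diff {X : Type*} [AddCommGroup X] [Module K X]
    (π : G → X ≃ₗ[K] X) (hπmul : ∀ (g h : G) (x : X), π g (π h x) = π (g * h) x)
    (hredX : HredProp K X π)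
    (Z : Submodule K X) (hZ : ∀ g, Z.map (π g).toLinearMap ≤ Z)
    (hinv : ∀ z ∈ Z, (∀ g, π g z = z) → z = 0) :
    Z ≤ Submodule.span K {w | ∃ z ∈ Z, ∃ g, w = z - π g z} := by
  set Z0 := Submodule.span K {w | ∃ z ∈ Z, ∃ g, w = z - π g z} with hZ0def
  have hZ0leZ : Z0 ≤ Z := by
    rw [hZ0def, Submodule.span_le]
    rintro w ⟨z, hz, g, rfl⟩
    exact sub_mem hz (hZ g ⟨z, hz, rfl⟩)
  have hZ0stab : ∀ g, Z0.map (π g).toLinearMap ≤ Z0 := by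
    intro g
    rw [hZ0def, Submodule.map_span, Submodule.span_le]
    rintro _ ⟨w, ⟨z, hz, h, rfl⟩, rfl⟩
    have hcalc : π g (z - π h z) = π g z - π (g * h * g⁻¹) (π g z) := by
      rw [map_sub, hπmul, hπmul]
      congr 2
      group
    simp only [SetLike.mem_coe, LinearEquiv.coe_coe]
    rw [hcalc]
    exact Submodule.subset_span ⟨π g z, hZ g ⟨z, hz, rfl⟩, g * h * g⁻¹, rfl⟩
  obtain ⟨C, hCstab, hC⟩ := hredX Z0 hZ0stab
  have hZC : Z ⊓ C = ⊥ := by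
    rw [eq_bot_iff]
    rintro x ⟨hxZ, hxC⟩
    have hxfix : ∀ g, π g x = x := by
      intro g
      have h1 : x - π g x ∈ Z0 := Submodule.subset_span ⟨x, hxZ, g, rfl⟩
      have h2 : x - π g x ∈ C := sub_mem hxC (hCstab g ⟨x, hxC, rfl⟩)
      have h3 : x - π g x = 0 :=
        (Submodule.mem_bot K).mp
          (hC.disjoint.le_bot (Submodule.mem_inf.mpr ⟨h1, h2⟩))
      exact (sub_eq_zero.mp h3).symm
    exact (Submodule.mem_bot K).mpr (hinv x hxZ hxfix)
  have hmod : (Z0 ⊔ C) ⊓ Z = Z0 ⊔ (C ⊓ Z) := sup_inf_assoc_of_le C hZ0leZ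
  have hzz : Z = Z0 ⊔ (C ⊓ Z) := by
    rw [← hmod, hC.sup_eq_top, top_inf_eq]
  have hfin : Z = Z0 := by
    rw [hzz, inf_comm, hZC, sup_bot_eq]
  exact le_of_eq hfin

end CRaux2

section GradedAux

variable {K : Type*} [Field K] {A : Type*} [CommRing A] [Algebra K A]
variable (𝒜 : ℤ → Submodule K A) [GradedAlgebra 𝒜]

/-- The degree-`i` projection as a linear map. -/
noncomputable def projL (i : ℤ) : A →ₗ[K] A :=
  (𝒜 i).subtype ∘ₗ (DFinsupp.lapply i) ∘ₗ (DirectSum.decomposeLinearEquiv 𝒜).toLinearMap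

lemma projL_apply (i : ℤ) (a : A) : projL 𝒜 i a = (DirectSum.decompose 𝒜 a i : A) := rfl

lemma projL_mem (i : ℤ) (a : A) : projL 𝒜 i a ∈ 𝒜 i := (DirectSum.decompose 𝒜 a i).2

lemma projL_of_mem_same {i : ℤ} {a : A} (h : a ∈ 𝒜 i) : projL 𝒜 i a = a :=
  DirectSum.decompose_of_mem_same 𝒜 h

lemma projL_of_mem_ne {i j : ℤ} {a : A} (h : a ∈ 𝒜 i) (hij : i ≠ j) : projL 𝒜 j a = 0 :=
  DirectSum.decompose_of_mem_ne 𝒜 h hij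

lemma projL_sum_support (a : A) :
    ∑ i ∈ (DirectSum.decompose 𝒜 a).support, projL 𝒜 i a = a :=
  DirectSum.sum_support_decompose 𝒜 a

lemma projL_comm (e : A ≃ₐ[K] A) (he : ∀ (j : ℤ), ∀ x ∈ 𝒜 j, e x ∈ 𝒜 j) (i : ℤ) (a : A) :
    projL 𝒜 i (e a) = e (projL 𝒜 i a) := by
  induction a using DirectSum.Decomposition.inductionOn 𝒜 with
  | zero => simp
  | @homogeneous j x =>
    by_cases h : (j : ℤ) = i
    · subst h
      rw [projL_of_mem_same 𝒜 (he j x x.2), projL_of_mem_same 𝒜 x.2]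
    · rw [projL_of_mem_ne 𝒜 (he j x x.2) h, projL_of_mem_ne 𝒜 x.2 h, map_zero]
  | add x y hx hy => simp [map_add, hx, hy]

lemma projL_mul_right {j : ℤ} {x : A} (hx : x ∈ 𝒜 j) (e : ℤ) (c : A) :
    projL 𝒜 e (c * x) = projL 𝒜 (e - j) c * x := by
  induction c using DirectSum.Decomposition.inductionOn 𝒜 with
  | zero => simp
  | @homogeneous h c' =>
    have hmem : (c' : A) * x ∈ 𝒜 (h + j) := SetLike.mul_mem_graded c'.2 hx
    by_cases hcase : h + j = e
    · have h1 : (h : ℤ) = e - j := by omega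
      rw [hcase] at hmem
      rw [projL_of_mem_same 𝒜 hmem, projL_of_mem_same 𝒜 (h1 ▸ c'.2)]
    · rw [projL_of_mem_ne 𝒜 hmem hcase, projL_of_mem_ne 𝒜 c'.2 (by omega), zero_mul]
  | add c₁ c₂ h₁ h₂ => rw [add_mul, map_add, h₁, h₂, map_add, add_mul]

end GradedAux

section Core

variable {K : Type*} [Field K] {A : Type*} [CommRing A] [Algebra K A]
variable {G : Type*} [Group G]

lemma core_bound [Algebra.FiniteType K A] (ρ : G →* (A ≃ₐ[K] A))
    (𝒜 : ℤ → Submodule K A) [GradedAlgebra 𝒜]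
    (hGgr : ∀ (g : G) (i : ℤ), (𝒜 i).map (ρ g).toLinearMap = 𝒜 i)
    (hred : ∀ W : Submodule K A, (∀ g : G, W.map (ρ g).toLinearMap ≤ W) →
      ∃ W' : Submodule K A, (∀ g : G, W'.map (ρ g).toLinearMap ≤ W') ∧ IsCompl W W')
    (hinvpos : ∀ i : ℤ, i < 0 → ∀ a ∈ 𝒜 i, (∀ g : G, ρ g a = a) → a = 0)
    (M₀ : Type*) [AddCommGroup M₀] [Module K M₀] [FiniteDimensional K M₀]
    (σ : G → M₀ →ₗ[K] M₀) (hσinv : ∀ g v, σ g (σ g⁻¹ v) = v) :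
    ∃ N : ℤ, ∀ i : ℤ, i < N → ∀ ψ : M₀ →ₗ[K] A,
      (∀ g v, ψ (σ g v) = ρ g (ψ v)) → (∀ v, ψ v ∈ 𝒜 i) → ψ = 0 := by
  have hρmem : ∀ (g : G) (j : ℤ), ∀ x ∈ 𝒜 j, ρ g x ∈ 𝒜 j := fun g j x hx => by
    rw [← hGgr g j]; exact ⟨x, hx, rfl⟩
  have hρmul : ∀ (g h : G) (a : A), ρ g (ρ h a) = ρ (g * h) a := fun g h a => by
    rw [map_mul ρ, AlgEquiv.mul_apply]
  haveI : IsNoetherianRing A := Algebra.FiniteType.isNoetherianRing K A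
  let b : Module.Basis (Fin (Module.finrank K M₀)) K M₀ := Module.finBasis K M₀
  haveI : IsNoetherian A (M₀ →ₗ[K] A) := isNoetherian_of_linearEquiv (b.constr A)
  set Dset : ℤ → Set (M₀ →ₗ[K] A) := fun i =>
    {ψ | (∀ g v, ψ (σ g v) = ρ g (ψ v)) ∧ ∀ v, ψ v ∈ 𝒜 i} with hDset
  set DA : Submodule A (M₀ →ₗ[K] A) := Submodule.span A (⋃ i, Dset i) with hDA
  obtain ⟨s, hs⟩ := IsNoetherian.noetherian DA
  have hTex : ∀ x ∈ s, ∃ t : Finset (M₀ →ₗ[K] A),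
      ↑t ⊆ (⋃ i, Dset i) ∧ x ∈ Submodule.span A (↑t : Set (M₀ →ₗ[K] A)) := by
    intro x hx
    have hxDA : x ∈ Submodule.span A (⋃ i, Dset i) := by
      rw [← hDA, ← hs]; exact Submodule.subset_span hx
    exact Submodule.mem_span_finite_of_mem_span hxDA
  choose tfun ht1 ht2 using hTex
  set T : Finset (M₀ →ₗ[K] A) := s.attach.biUnion (fun x => tfun x.1 x.2) with hT
  have hTsub : (↑T : Set (M₀ →ₗ[K] A)) ⊆ ⋃ i, Dset i := by
    intro m hm
    rw [hT] at hm
    simp only [Finset.coe_biUnion, Finset.mem_coe, Finset.mem_attach, Set.mem_iUnion,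
      Set.iUnion_true] at hm
    obtain ⟨x, hmx⟩ := hm
    exact ht1 x.1 x.2 hmx
  have hspanT : DA ≤ Submodule.span A (↑T : Set (M₀ →ₗ[K] A)) := by
    rw [← hs, Submodule.span_le]
    intro x hx
    refine Submodule.span_le.mpr ?_ (ht2 x hx)
    refine le_trans ?_ Submodule.subset_span
    intro m hm
    rw [hT]
    simp only [Finset.coe_biUnion, Finset.mem_coe, Finset.mem_attach, Set.mem_iUnion,
      Set.iUnion_true]
    exact ⟨⟨x, hx⟩, hm⟩
  have hTdeg : ∀ m ∈ T, ∃ i, m ∈ Dset i := fun m hm => Set.mem_iUnion.mp (hTsub hm)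
  set αdeg : (M₀ →ₗ[K] A) → ℤ :=
    fun m => if h : ∃ i : ℤ, m ∈ Dset i then h.choose else 0 with hαdeg
  have hα : ∀ m ∈ T, m ∈ Dset (αdeg m) := by
    intro m hm
    have h := hTdeg m hm
    simp only [hαdeg, dif_pos h]
    exact h.choose_spec
  set N : ℤ := (insert (0 : ℤ) (T.image αdeg)).min' (Finset.insert_nonempty _ _) with hNdef
  have hNle : ∀ m ∈ T, N ≤ αdeg m := fun m hm =>
    Finset.min'_le _ _ (Finset.mem_insert_of_mem (Finset.mem_image_of_mem _ hm))
  refine ⟨N, ?_⟩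
  intro i hi ψ hψeq hψmem
  have hmemT : ψ ∈ Submodule.span A (↑T : Set (M₀ →ₗ[K] A)) :=
    hspanT (Submodule.subset_span (Set.mem_iUnion.mpr ⟨i, hψeq, hψmem⟩))
  obtain ⟨cf, -, hcf⟩ := Submodule.mem_span_finset.mp hmemT
  set γ : (M₀ →ₗ[K] A) → A := fun m => projL 𝒜 (i - αdeg m) (cf m) with hγ
  have hkey : ∀ v, ψ v = ∑ m ∈ T, γ m * m v := by
    intro v
    have h1 : ψ v = projL 𝒜 i (ψ v) := (projL_of_mem_same 𝒜 (hψmem v)).symm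
    rw [h1]
    conv_lhs => rw [← hcf]
    rw [LinearMap.sum_apply, map_sum]
    apply Finset.sum_congr rfl
    intro m hm
    rw [LinearMap.smul_apply, smul_eq_mul, projL_mul_right 𝒜 ((hα m hm).2 v) i (cf m)]
  -- the orbit of the coefficient tuple
  set piact : G → ({m : M₀ →ₗ[K] A // m ∈ T} → A) ≃ₗ[K] ({m : M₀ →ₗ[K] A // m ∈ T} → A) :=
    fun g => LinearEquiv.piCongrRight (fun _ => (ρ g).toLinearEquiv) with hpiact
  have hpiapp : ∀ g z m, piact g z m = ρ g (z m) := fun g z m => rfl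
  set orb : G → {m : M₀ →ₗ[K] A // m ∈ T} → A := fun g m => ρ g (γ m.1) with horb
  set Z : Submodule K ({m : M₀ →ₗ[K] A // m ∈ T} → A) := Submodule.span K (Set.range orb)
    with hZdef
  have horbZ : ∀ g, orb g ∈ Z := fun g => Submodule.subset_span ⟨g, rfl⟩
  have horbmul : ∀ g h, piact g (orb h) = orb (g * h) := by
    intro g h; funext m
    show ρ g (ρ h (γ m.1)) = ρ (g * h) (γ m.1)
    exact hρmul g h _
  have hZstab : ∀ g, Z.map (piact g).toLinearMap ≤ Z := by
    intro g
    rw [hZdef, Submodule.map_span, Submodule.span_le]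
    rintro _ ⟨_, ⟨h, rfl⟩, rfl⟩
    simp only [SetLike.mem_coe, LinearEquiv.coe_coe]
    rw [horbmul g h]
    exact horbZ _
  have hZpi : Z ≤ Submodule.pi Set.univ (fun m => 𝒜 (i - αdeg m.1)) := by
    rw [hZdef, Submodule.span_le]
    rintro _ ⟨g, rfl⟩
    intro m _
    exact hρmem g _ _ (projL_mem 𝒜 _ _)
  have hZinv : ∀ z ∈ Z, (∀ g, piact g z = z) → z = 0 := by
    intro z hz hfix
    funext m
    have h1 : z m ∈ 𝒜 (i - αdeg m.1) := hZpi hz m (Set.mem_univ m)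
    have hlt : i - αdeg m.1 < 0 := by have := hNle m.1 m.2; omega
    have hfix' : ∀ g, ρ g (z m) = z m := by
      intro g
      exact congrFun (hfix g) m
    exact hinvpos _ hlt _ h1 hfix'
  have hred' : HredProp K A (fun g => (ρ g).toLinearEquiv) := by
    intro U hU
    exact hred U hU
  have hpired := hred_pi (K := K) (G := G) _ hred' {m : M₀ →ₗ[K] A // m ∈ T}
  have hpimul : ∀ (g h : G) (x : {m : M₀ →ₗ[K] A // m ∈ T} → A),
      piact g (piact h x) = piact (g * h) x := by
    intro g h x; funext m
    show ρ g (ρ h (x m)) = ρ (g * h) (x m)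
    exact hρmul g h _
  have hZ0 := span_orbit_diff piact hpimul hpired Z hZstab hZinv
  -- the evaluation map
  have hsmul_assoc : ∀ (k : K) (c : A) (f : M₀ →ₗ[K] A), (k • c) • f = k • (c • f) := by
    intro k c f
    ext v
    simp [smul_assoc]
  set ν : ({m : M₀ →ₗ[K] A // m ∈ T} → A) →ₗ[K] (M₀ →ₗ[K] A) :=
    { toFun := fun z => ∑ m : {m : M₀ →ₗ[K] A // m ∈ T}, z m • (m.1 : M₀ →ₗ[K] A)
      map_add' := by
        intro z1 z2
        rw [← Finset.sum_add_distrib]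
        apply Finset.sum_congr rfl
        intro m _
        rw [Pi.add_apply, add_smul]
      map_smul' := by
        intro k z
        rw [RingHom.id_apply, Finset.smul_sum]
        apply Finset.sum_congr rfl
        intro m _
        rw [Pi.smul_apply, hsmul_assoc] } with hν
  have hνapp : ∀ z, ν z = ∑ m : {m : M₀ →ₗ[K] A // m ∈ T}, z m • (m.1 : M₀ →ₗ[K] A) :=
    fun z => rfl
  have hνorb : ∀ h : G, ν (orb h) = ψ := by
    intro h
    apply LinearMap.ext
    intro v
    have hsum : (ν (orb h)) v = ∑ m : {m : M₀ →ₗ[K] A // m ∈ T}, ρ h (γ m.1) * m.1 v := by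
      rw [hνapp, LinearMap.sum_apply]
      apply Finset.sum_congr rfl
      intro m _
      rw [LinearMap.smul_apply, smul_eq_mul]
    rw [hsum]
    have h2 : ψ v = ρ h (ψ (σ h⁻¹ v)) := by rw [← hψeq h (σ h⁻¹ v), hσinv]
    rw [h2, hkey (σ h⁻¹ v), map_sum, ← Finset.sum_coe_sort T]
    apply Finset.sum_congr rfl
    intro m _
    rw [map_mul]
    congr 1
    rw [← (hα m.1 m.2).1 h (σ h⁻¹ v), hσinv]
  have hkill : ∀ z ∈ Z, ∀ g, ν (piact g z) = ν z := by
    intro z hz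
    induction hz using Submodule.span_induction with
    | mem x hx =>
      obtain ⟨h, rfl⟩ := hx
      intro g
      rw [horbmul, hνorb, hνorb]
    | zero => intro g; rw [map_zero, map_zero]
    | add x y hx hy ihx ihy =>
      intro g
      rw [map_add, map_add, map_add, ihx g, ihy g]
    | smul a x hx ihx =>
      intro g
      rw [map_smul, map_smul, map_smul, ihx g]
  have hgen : {w | ∃ z ∈ Z, ∃ g, w = z - piact g z} ⊆ (LinearMap.ker ν : Set _) := by
    rintro w ⟨z, hz, g, rfl⟩
    rw [SetLike.mem_coe, LinearMap.mem_ker, map_sub, hkill z hz g, sub_self]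
  have hZker : Z ≤ LinearMap.ker ν := le_trans hZ0 (Submodule.span_le.mpr hgen)
  have hν1 : ν (orb 1) = 0 := hZker (horbZ 1)
  rw [hνorb 1] at hν1
  exact hν1

end Core


/-- Losev, Proposition 2.1.2.  Let `A` be a finitely generated commutative algebra with a
rational action of `G × K^×` (`G` reductive, encoded via complete reducibility of the action on
`A`; the `K^×`-action gives the `ℤ`-grading `𝒜`), such that `A^G` has no negative graded
components.  Then for every (dominant weight `λ`, i.e. every finite-dimensional irreducible
`G`-module `Vt`) the isotypic component `A_λ` is a graded subspace whose grading is bounded from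
below; consequently every finite-dimensional `G × K^×`-submodule of `A[[ħ]]` lies in `A[ħ]`
(here `K^×` acts on `ħ` with a positive weight `k`). -/
theorem stmt_6 (K A : Type*) [Field K] [IsAlgClosed K] [CharZero K]
    [CommRing A] [Algebra K A] [Algebra.FiniteType K A]
    (G : Type*) [Group G] (ρ : G →* (A ≃ₐ[K] A))
    (𝒜 : ℤ → Submodule K A) [GradedAlgebra 𝒜]
    (hGgr : ∀ (g : G) (i : ℤ), (𝒜 i).map (ρ g).toLinearMap = 𝒜 i)
    -- rationality of the action
    (hrat : ∀ a : A, ∃ W : Submodule K A, FiniteDimensional K W ∧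
      (∀ g : G, W.map (ρ g).toLinearMap ≤ W) ∧ a ∈ W)
    -- complete reducibility (reductivity of `G`)
    (hred : ∀ W : Submodule K A, (∀ g : G, W.map (ρ g).toLinearMap ≤ W) →
      ∃ W' : Submodule K A, (∀ g : G, W'.map (ρ g).toLinearMap ≤ W') ∧ IsCompl W W')
    -- `A^G` has no negative graded components
    (hinvpos : ∀ i : ℤ, i < 0 → ∀ a ∈ 𝒜 i, (∀ g : G, ρ g a = a) → a = 0)
    -- a finite-dimensional irreducible `G`-module (`L(λ)` for a dominant weight `λ`)
    (Vt : Type*) [AddCommGroup Vt] [Module K Vt] [FiniteDimensional K Vt] [Nontrivial Vt]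
    (σv : G →* (Vt ≃ₗ[K] Vt))
    (hirr : ∀ U : Submodule K Vt, (∀ (g : G), ∀ v ∈ U, σv g v ∈ U) → U = ⊥ ∨ U = ⊤)
    -- the weight of the `K^×`-action on `ħ`
    (k : ℕ) (hk : 0 < k) :
    -- `A_λ`: the isotypic component of type `Vt`
    let Aiso : Submodule K A := ⨆ (f : Vt →ₗ[K] A) (_ : ∀ (g : G) (v : Vt),
      f (σv g v) = ρ g (f v)), LinearMap.range f
    -- the `G`-action on `A[[ħ]]`, coefficientwise
    let gAct : G → PowerSeries A → PowerSeries A := fun g F =>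
      PowerSeries.mk fun n => ρ g (PowerSeries.coeff (R := A) n F)
    -- the `K^×`-action on `A[[ħ]]`: `t · (a ħ^n) = t^{kn} (t·a) ħ^n`, where `t` acts on `a ∈ 𝒜 i`
    -- by `t^i`
    let tAct : Kˣ → PowerSeries A → PowerSeries A := fun t F =>
      PowerSeries.mk fun n => ((t ^ (k * n : ℕ) : Kˣ) : K) •
        ((DirectSum.decompose 𝒜 (PowerSeries.coeff (R := A) n F)).sum
          fun i x => ((t ^ i : Kˣ) : K) • (x : A))
    -- (1) the isotypic component `A_λ` is graded with grading bounded from below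
    (∃ N : ℤ, (∀ i : ℤ, i < N → Aiso ⊓ 𝒜 i = ⊥) ∧ Aiso = ⨆ i : ℤ, Aiso ⊓ 𝒜 i) ∧
    -- (2) every finite-dimensional `G × K^×`-stable subspace of `A[[ħ]]` lies in `A[ħ]`
    (∀ M : Submodule K (PowerSeries A), FiniteDimensional K M →
      (∀ (g : G), ∀ F ∈ M, gAct g F ∈ M) → (∀ (t : Kˣ), ∀ F ∈ M, tAct t F ∈ M) →
      ∀ F ∈ M, ∃ N : ℕ, ∀ n : ℕ, N ≤ n → PowerSeries.coeff (R := A) n F = 0) := by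
  intro Aiso gAct tAct
  have hρmem : ∀ (g : G) (j : ℤ), ∀ x ∈ 𝒜 j, ρ g x ∈ 𝒜 j := fun g j x hx => by
    rw [← hGgr g j]; exact ⟨x, hx, rfl⟩
  have hρmul : ∀ (g h : G) (a : A), ρ g (ρ h a) = ρ (g * h) a := fun g h a => by
    rw [map_mul ρ, AlgEquiv.mul_apply]
  have hρinv : ∀ (g : G) (a : A), ρ g (ρ g⁻¹ a) = a := fun g a => by
    rw [hρmul, mul_inv_cancel, map_one ρ, AlgEquiv.one_apply]
  have hprojcomm : ∀ (g : G) (j : ℤ) (a : A), projL 𝒜 j (ρ g a) = ρ g (projL 𝒜 j a) :=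
    fun g j a => projL_comm 𝒜 (ρ g) (hρmem g) j a
  have hAiso : Aiso = ⨆ (f : Vt →ₗ[K] A) (_ : ∀ (g : G) (v : Vt),
      f (σv g v) = ρ g (f v)), LinearMap.range f := rfl
  constructor
  · -- Part (1)
    obtain ⟨N, hN⟩ := core_bound ρ 𝒜 hGgr hred hinvpos Vt (fun g => (σv g).toLinearMap)
      (by
        intro g v
        show σv g ((σv g⁻¹) v) = v
        rw [map_inv σv g]
        exact (σv g).apply_symm_apply v)
    have hcond : ∀ f : Vt →ₗ[K] A, (∀ (g : G) (v : Vt), f (σv g v) = ρ g (f v)) →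
        ∀ j : ℤ, ∀ (g : G) (v : Vt),
          (projL 𝒜 j ∘ₗ f) (σv g v) = ρ g ((projL 𝒜 j ∘ₗ f) v) := by
      intro f hf j g v
      show projL 𝒜 j (f (σv g v)) = ρ g (projL 𝒜 j (f v))
      rw [hf g v, hprojcomm]
    have hAiso_ind : ∀ (C : A → Prop), C 0 → (∀ x y, C x → C y → C (x + y)) →
        (∀ (f : Vt →ₗ[K] A), (∀ (g : G) (v : Vt), f (σv g v) = ρ g (f v)) → ∀ v, C (f v)) →
        ∀ a, a ∈ Aiso → C a := by
      intro C h0 hadd hr a ha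
      rw [hAiso, iSup_subtype'] at ha
      refine Submodule.iSup_induction (motive := C)
        (fun (x : {f : Vt →ₗ[K] A // ∀ (g : G) (v : Vt), f (σv g v) = ρ g (f v)}) =>
          LinearMap.range (x.1)) ha ?_ h0 hadd
      rintro ⟨f, hf⟩ x ⟨v, rfl⟩
      exact hr f hf v
    refine ⟨N, ?_, ?_⟩
    · intro j hj
      rw [eq_bot_iff]
      intro x hx
      rw [Submodule.mem_inf] at hx
      obtain ⟨hx1, hx2⟩ := hx
      have hproj0 : ∀ a, a ∈ Aiso → projL 𝒜 j a = 0 := by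
        refine hAiso_ind (fun a => projL 𝒜 j a = 0) (map_zero _)
          (fun x y hx hy => by
            show projL 𝒜 j (x + y) = 0
            rw [map_add, hx, hy, add_zero]) ?_
        intro f hf v
        have hzero : (projL 𝒜 j ∘ₗ f) = 0 :=
          hN j hj _ (hcond f hf j) (fun v => projL_mem 𝒜 j (f v))
        exact congrArg (fun (ψ : Vt →ₗ[K] A) => ψ v) hzero
      rw [Submodule.mem_bot, ← projL_of_mem_same 𝒜 hx2]
      exact hproj0 x hx1
    · apply le_antisymm
      · intro a ha
        refine hAiso_ind (fun a => a ∈ ⨆ i : ℤ, Aiso ⊓ 𝒜 i) (zero_mem _)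
          (fun x y hx hy => add_mem hx hy) ?_ a ha
        intro f hf v
        show f v ∈ ⨆ i : ℤ, Aiso ⊓ 𝒜 i
        rw [← projL_sum_support 𝒜 (f v)]
        apply Submodule.sum_mem
        intro j _
        apply Submodule.mem_iSup_of_mem j
        rw [Submodule.mem_inf]
        constructor
        · have hle : LinearMap.range (projL 𝒜 j ∘ₗ f) ≤ Aiso := by
            rw [hAiso]
            exact le_iSup₂_of_le (projL 𝒜 j ∘ₗ f) (hcond f hf j) (le_refl _)
          exact hle ⟨v, rfl⟩
        · exact projL_mem 𝒜 j (f v)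
      · exact iSup_le (fun i => inf_le_left)
  · -- Part (2)
    intro M hMfd hMg hMt F hF
    haveI := hMfd
    have htAct : ∀ (t : Kˣ) (F' : PowerSeries A), tAct t F' =
        PowerSeries.mk fun n => ((t ^ (k * n : ℕ) : Kˣ) : K) •
          ((DirectSum.decompose 𝒜 (PowerSeries.coeff (R := A) n F')).sum
            fun i x => ((t ^ i : Kˣ) : K) • (x : A)) := fun _ _ => rfl
    -- the action of `G` on `M`
    let gL : G → (PowerSeries A →ₗ[K] PowerSeries A) := fun g =>
      { toFun := fun F' => PowerSeries.mk fun n => ρ g (PowerSeries.coeff (R := A) n F')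
        map_add' := by
          intro x y
          ext n
          simp [PowerSeries.coeff_mk]
        map_smul' := by
          intro c x
          ext n
          simp only [PowerSeries.coeff_mk, PowerSeries.coeff_smul, RingHom.id_apply,
            PowerSeries.coeff_smul]
          exact LinearMap.map_smul (ρ g).toLinearMap c _ }
    have hgLcoeff : ∀ (g : G) (X : PowerSeries A) (n : ℕ),
        PowerSeries.coeff (R := A) n (gL g X) = ρ g (PowerSeries.coeff (R := A) n X) := by
      intro g X n
      show PowerSeries.coeff (R := A) n (PowerSeries.mk fun m => ρ g (PowerSeries.coeff (R := A) m X))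
        = ρ g (PowerSeries.coeff (R := A) n X)
      exact PowerSeries.coeff_mk n _
    have hgLmem : ∀ (g : G), ∀ x ∈ M, gL g x ∈ M := fun g x hx => hMg g x hx
    let σM : G → (↥M →ₗ[K] ↥M) := fun g => (gL g).restrict (hgLmem g)
    have hσMcoe : ∀ (g : G) (v : ↥M), (σM g v : PowerSeries A) = gL g ↑v := fun g v => rfl
    have hσinv : ∀ (g : G) (v : ↥M), σM g (σM g⁻¹ v) = v := by
      intro g v
      apply Subtype.ext
      rw [hσMcoe, hσMcoe]
      ext n
      rw [hgLcoeff, hgLcoeff, hρinv]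
    obtain ⟨N₁, hN₁⟩ := core_bound ρ 𝒜 hGgr hred hinvpos (↥M) σM hσinv
    -- coefficient maps
    let cL : ℕ → (↥M →ₗ[K] A) := fun n =>
      { toFun := fun F' => PowerSeries.coeff (R := A) n (F' : PowerSeries A)
        map_add' := by intro x y; simp
        map_smul' := by intro c x; simp [PowerSeries.coeff_smul] }
    have hlow : ∀ (j : ℤ), j < N₁ → ∀ (n : ℕ) (v : ↥M),
        projL 𝒜 j (PowerSeries.coeff (R := A) n (v : PowerSeries A)) = 0 := by
      intro j hj n v
      have heq : ∀ (g : G) (v : ↥M),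
          (projL 𝒜 j ∘ₗ cL n) (σM g v) = ρ g ((projL 𝒜 j ∘ₗ cL n) v) := by
        intro g v
        show projL 𝒜 j (PowerSeries.coeff (R := A) n ((σM g v : PowerSeries A)))
          = ρ g (projL 𝒜 j (PowerSeries.coeff (R := A) n (v : PowerSeries A)))
        rw [hσMcoe, hgLcoeff, hprojcomm]
      have h0 : (projL 𝒜 j ∘ₗ cL n) = 0 :=
        hN₁ j hj _ heq (fun v => projL_mem 𝒜 _ _)
      exact congrArg (fun (ψ : ↥M →ₗ[K] A) => ψ v) h0
    -- a linear dependence among the `tAct`-translates of `F`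
    set d := Module.finrank K ↥M with hd
    set u2 : Kˣ := Units.mk0 (2 : K) two_ne_zero with hu2
    have hVmem : ∀ j : Fin (d + 1), tAct (u2 ^ (j : ℕ)) F ∈ M := fun j => hMt _ F hF
    set Vj : Fin (d + 1) → ↥M := fun j => ⟨tAct (u2 ^ (j : ℕ)) F, hVmem j⟩ with hVj
    have hdep : ¬ LinearIndependent K Vj := by
      intro h
      have hcard := h.fintype_card_le_finrank
      rw [Fintype.card_fin] at hcard
      omega
    obtain ⟨s, gc, hrel, j₀, hj₀s, hgj₀⟩ := not_linearIndependent_iff.mp hdep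
    have hrelA : ∑ j ∈ s, gc j • tAct (u2 ^ (j : ℕ)) F = 0 := by
      have h1 := congrArg (fun (x : ↥M) => (x : PowerSeries A)) hrel
      simpa using h1
    set q : Polynomial K := ∑ j ∈ s, Polynomial.C (gc j) * Polynomial.X ^ (j : ℕ) with hq
    have hq0 : q ≠ 0 := by
      intro h
      have hc : q.coeff (j₀ : ℕ) = gc j₀ := by
        rw [hq, Polynomial.finset_sum_coeff]
        rw [Finset.sum_eq_single j₀]
        · simp [Polynomial.coeff_C_mul, Polynomial.coeff_X_pow]
        · intro j _ hne
          have hne' : ((j : ℕ) : ℕ) ≠ ((j₀ : ℕ) : ℕ) := fun hh => hne (Fin.val_injective hh)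
          simp [Polynomial.coeff_C_mul, Polynomial.coeff_X_pow, if_neg (Ne.symm hne')]
        · intro hj; exact absurd hj₀s hj
      rw [h, Polynomial.coeff_zero] at hc
      exact hgj₀ hc.symm
    -- graded components of coefficients of `tAct t F'`
    have hcoefft : ∀ (t : Kˣ) (n : ℕ) (j : ℤ) (F' : PowerSeries A),
        projL 𝒜 j (PowerSeries.coeff (R := A) n (tAct t F')) =
          (((t ^ (k * n : ℕ) : Kˣ) : K) * ((t ^ j : Kˣ) : K)) •
            projL 𝒜 j (PowerSeries.coeff (R := A) n F') := by
      intro t n j F'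
      rw [htAct t F', PowerSeries.coeff_mk, map_smul, mul_smul]
      congr 1
      set a := PowerSeries.coeff (R := A) n F' with ha
      rw [DFinsupp.sum, map_sum]
      by_cases hjsup : j ∈ (DirectSum.decompose 𝒜 a).support
      · rw [Finset.sum_eq_single j]
        · rw [map_smul, projL_of_mem_same 𝒜 (DirectSum.decompose 𝒜 a j).2, projL_apply]
        · intro i _ hne
          rw [map_smul, projL_of_mem_ne 𝒜 (DirectSum.decompose 𝒜 a i).2 hne, smul_zero]
        · intro h; exact absurd hjsup h
      · rw [Finset.sum_eq_zero, projL_apply, DFinsupp.notMem_support_iff.mp hjsup,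
          ZeroMemClass.coe_zero, smul_zero]
        intro i hi
        have hne : i ≠ j := fun h => hjsup (h ▸ hi)
        rw [map_smul, projL_of_mem_ne 𝒜 (DirectSum.decompose 𝒜 a i).2 hne, smul_zero]
    -- scalar computation
    have hscal : ∀ (l : Fin (d + 1)) (n : ℕ) (j : ℤ),
        (((u2 ^ (l : ℕ)) ^ (k * n : ℕ) : Kˣ) : K) * (((u2 ^ (l : ℕ)) ^ j : Kˣ) : K)
          = ((2 : K) ^ (((k * n : ℕ) : ℤ) + j)) ^ (l : ℕ) := by
      intro l n j
      have h2ne : (2 : K) ≠ 0 := two_ne_zero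
      have hxa : ∀ (m : ℤ), ((u2 ^ m : Kˣ) : K) = (2 : K) ^ m := by
        intro m
        rw [Units.val_zpow_eq_zpow_val, hu2, Units.val_mk0]
      have h1 : ((u2 ^ (l : ℕ)) ^ (k * n : ℕ) : Kˣ) = u2 ^ (((l : ℕ) * (k * n) : ℕ) : ℤ) := by
        rw [← pow_mul, zpow_natCast]
      have h2 : ((u2 ^ (l : ℕ)) ^ j : Kˣ) = u2 ^ (((l : ℕ) : ℤ) * j) := by
        rw [← zpow_natCast u2 (l : ℕ), ← zpow_mul]
      rw [h1, h2, hxa, hxa, ← zpow_add₀ h2ne]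
      rw [← zpow_natCast ((2 : K) ^ (((k * n : ℕ) : ℤ) + j)) (l : ℕ), ← zpow_mul]
      congr 1
      push_cast
      ring
    -- roots of `q`
    have hroot : ∀ (n : ℕ) (j : ℤ),
        projL 𝒜 j (PowerSeries.coeff (R := A) n F) ≠ 0 →
        Polynomial.eval ((2 : K) ^ (((k * n : ℕ) : ℤ) + j)) q = 0 := by
      intro n j hne
      set y : K := (2 : K) ^ (((k * n : ℕ) : ℤ) + j) with hy
      have h1 : ∑ l ∈ s, gc l • projL 𝒜 j (PowerSeries.coeff (R := A) n (tAct (u2 ^ (l : ℕ)) F))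
          = 0 := by
        have h0 := congrArg (fun (X : PowerSeries A) =>
          projL 𝒜 j (PowerSeries.coeff (R := A) n X)) hrelA
        simpa [map_sum, map_smul, PowerSeries.coeff_smul] using h0
      have h2 : ∀ l ∈ s, gc l • projL 𝒜 j (PowerSeries.coeff (R := A) n (tAct (u2 ^ (l : ℕ)) F))
          = (gc l * y ^ (l : ℕ)) • projL 𝒜 j (PowerSeries.coeff (R := A) n F) := by
        intro l _
        rw [hcoefft, smul_smul, hscal l n j]
      rw [Finset.sum_congr rfl h2, ← Finset.sum_smul] at h1
      have h3 := smul_eq_zero.mp h1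
      rcases h3 with h3 | h3
      · rw [hq, Polynomial.eval_finset_sum]
        simpa using h3
      · exact absurd h3 hne
    -- injectivity of `e ↦ 2 ^ e`
    have h2ne : (2 : K) ≠ 0 := two_ne_zero
    have hnat : ∀ m : ℕ, (2 : K) ^ (m : ℤ) = 1 → m = 0 := by
      intro m hm
      rw [zpow_natCast] at hm
      have h1 : ((2 ^ m : ℕ) : K) = ((1 : ℕ) : K) := by push_cast; exact hm
      have h2 : (2 : ℕ) ^ m = 1 := Nat.cast_injective h1
      by_contra hm0
      rcases Nat.exists_eq_succ_of_ne_zero hm0 with ⟨m', rfl⟩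
      have := Nat.one_lt_two_pow' m'
      omega
    have hinj : Function.Injective (fun e : ℤ => (2 : K) ^ e) := by
      intro e f hef
      simp only at hef
      have hsub : (2 : K) ^ (e - f) = 1 := by
        rw [zpow_sub₀ h2ne, hef, div_self (zpow_ne_zero f h2ne)]
      have hone : e - f = 0 := by
        rcases le_or_gt 0 (e - f) with h | h
        · have := hnat (e - f).toNat (by rwa [Int.toNat_of_nonneg h])
          omega
        · have hneg : (2 : K) ^ (-(e - f)) = 1 := by
            rw [zpow_neg, hsub, inv_one]
          have := hnat (-(e - f)).toNat (by rwa [Int.toNat_of_nonneg (by omega)])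
          omega
      omega
    set Eact : Finset ℤ := q.roots.toFinset.preimage (fun e => (2 : K) ^ e) hinj.injOn
      with hEact
    set Bmax : ℤ := (insert (0 : ℤ) Eact).max' (Finset.insert_nonempty _ _) with hBmax
    refine ⟨(Bmax - N₁).toNat + 1, ?_⟩
    intro n hn
    have hall : ∀ j : ℤ, projL 𝒜 j (PowerSeries.coeff (R := A) n F) = 0 := by
      intro j
      by_cases hj : j < N₁
      · exact hlow j hj n ⟨F, hF⟩
      · by_contra hne
        have hev := hroot n j hne
        have hyroot : ((2 : K) ^ (((k * n : ℕ) : ℤ) + j)) ∈ q.roots :=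
          Polynomial.mem_roots'.mpr ⟨hq0, hev⟩
        have hmem : ((k * n : ℕ) : ℤ) + j ∈ Eact := by
          rw [hEact, Finset.mem_preimage, Multiset.mem_toFinset]
          exact hyroot
        have hle1 : ((k * n : ℕ) : ℤ) + j ≤ Bmax :=
          Finset.le_max' _ _ (Finset.mem_insert_of_mem hmem)
        have hkn : (n : ℤ) ≤ ((k * n : ℕ) : ℤ) := by
          have h1 : n ≤ k * n := Nat.le_mul_of_pos_left n hk
          exact_mod_cast h1
        have h2 : (Bmax - N₁) ≤ ((Bmax - N₁).toNat : ℤ) := Int.self_le_toNat _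
        have h3 : ((Bmax - N₁).toNat + 1 : ℕ) ≤ n := hn
        have h4 : (((Bmax - N₁).toNat + 1 : ℕ) : ℤ) ≤ (n : ℤ) := by exact_mod_cast h3
        push_cast at h4
        omega
    rw [← projL_sum_support 𝒜 (PowerSeries.coeff (R := A) n F)]
    apply Finset.sum_eq_zero
    intro j _
    exact hall j
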